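/- Let Λ be a noetherian commutative local ring, let A be an associative unital Λ-algebra that is finitely generated as a Λ-module, and let ρ : A → B be a surjective homomorphism of Λ-algebras. Then the induced group homomorphism A^× → B^× on groups of invertible elements is surjective; that is, every unit of B is the image under ρ of a unit of A. -/

import Mathlib

open Polynomial

/-- If the inverse of a unit `b` is integral over `Λ`, then it lies in `Λ[b]`. -/
lemma aux_inv_mem_adjoin {Λ B : Type*} [CommRing Λ] [Ring B] [Algebra Λ B]
    (b : Bˣ) (h : IsIntegral Λ ((b⁻¹ : Bˣ) : B)) :
    ((b⁻¹ : Bˣ) : B) ∈ Algebra.adjoin Λ {(b : B)} := by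
  obtain ⟨p, pm, hp⟩ := h
  have hp' : aeval ((b⁻¹ : Bˣ) : B) p = 0 := hp
  set n := p.natDegree with hn
  rcases Nat.eq_zero_or_pos n with h0 | h1
  · have hp1 : p = 1 := pm.natDegree_eq_zero.mp h0
    rw [hp1, map_one] at hp'
    haveI : Subsingleton B := subsingleton_of_zero_eq_one hp'.symm
    have : ((b⁻¹ : Bˣ) : B) = 1 := Subsingleton.elim _ _
    rw [this]
    exact one_mem _
  · -- key computation: (b⁻¹)^i * b^(n-1) = b^((n-1 : ℤ) - i)
    have key : ∀ i : ℕ,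
        ((b⁻¹ : Bˣ) : B) ^ i * ((b : B)) ^ (n - 1)
          = ((b ^ (((n - 1 : ℕ) : ℤ) - (i : ℤ)) : Bˣ) : B) := by
      intro i
      have hu : (b⁻¹) ^ i * b ^ (n - 1) = b ^ (((n - 1 : ℕ) : ℤ) - (i : ℤ)) := by
        rw [inv_pow, ← zpow_natCast b i, ← zpow_neg, ← zpow_natCast b (n - 1), ← zpow_add,
          sub_eq_neg_add]
      calc ((b⁻¹ : Bˣ) : B) ^ i * ((b : B)) ^ (n - 1)
          = (((b⁻¹) ^ i * b ^ (n - 1) : Bˣ) : B) := by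
            rw [Units.val_mul, Units.val_pow_eq_pow_val, Units.val_pow_eq_pow_val]
        _ = ((b ^ (((n - 1 : ℕ) : ℤ) - (i : ℤ)) : Bˣ) : B) := by rw [hu]
    have H : (∑ i ∈ Finset.range (n + 1), p.coeff i • ((b⁻¹ : Bˣ) : B) ^ i)
        * ((b : B)) ^ (n - 1) = 0 := by
      rw [← aeval_eq_sum_range, hp', zero_mul]
    rw [Finset.sum_mul] at H
    simp only [smul_mul_assoc] at H
    have H2 : ∑ i ∈ Finset.range (n + 1),
        p.coeff i • ((b ^ (((n - 1 : ℕ) : ℤ) - (i : ℤ)) : Bˣ) : B) = 0 := by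
      rw [← H]
      exact Finset.sum_congr rfl fun i _ => by rw [key i]
    rw [Finset.sum_range_succ] at H2
    have hcn : p.coeff n = 1 := pm.coeff_natDegree
    have hexp : (((n - 1 : ℕ) : ℤ)) - (n : ℤ) = -1 := by omega
    rw [hcn, one_smul, hexp, zpow_neg_one] at H2
    have hu2 : ((b⁻¹ : Bˣ) : B) =
        -∑ i ∈ Finset.range n, p.coeff i • ((b ^ (((n - 1 : ℕ) : ℤ) - (i : ℤ)) : Bˣ) : B) :=
      eq_neg_of_add_eq_zero_right H2
    rw [hu2]
    refine neg_mem (sum_mem fun i hi => ?_)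
    have hi' : i < n := Finset.mem_range.mp hi
    have hexp2 : (((n - 1 : ℕ) : ℤ)) - (i : ℤ) = ((n - 1 - i : ℕ) : ℤ) := by omega
    rw [hexp2, zpow_natCast, Units.val_pow_eq_pow_val]
    exact Subalgebra.smul_mem _ (pow_mem (Algebra.self_mem_adjoin_singleton Λ (b : B)) _) _

/-- "Stable range 1" in a product of fields. -/
lemma aux_sr1_pi {ι : Type*} {K : ι → Type*} [∀ i, Field (K i)]
    (I : Ideal (∀ i, K i)) (c c' : ∀ i, K i) (h : c * c' - 1 ∈ I) :
    ∃ x ∈ I, IsUnit (c + x) := by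
  classical
  set e : ∀ i, K i := fun i => if c i = 0 then 1 else 0 with he
  refine ⟨(c * c' - 1) * e, I.mul_mem_right _ h, ?_⟩
  have hne : ∀ i, (c + (c * c' - 1) * e) i ≠ 0 := by
    intro i
    by_cases hc : c i = 0 <;>
      simp [he, hc, Pi.add_apply, Pi.mul_apply, Pi.sub_apply, Pi.one_apply]
  exact isUnit_iff_exists_inv.mpr
    ⟨fun i => ((c + (c * c' - 1) * e) i)⁻¹, funext fun i => mul_inv_cancel₀ (hne i)⟩

/-- Units lift along a quotient by an ideal contained in the Jacobson radical. -/
lemma aux_isUnit_of_quotient {R : Type*} [CommRing R] {J : Ideal R}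
    (hJ : J ≤ Ideal.jacobson ⊥) {r : R} (h : IsUnit (Ideal.Quotient.mk J r)) : IsUnit r := by
  obtain ⟨u, hu⟩ := h
  obtain ⟨s, hs⟩ := Ideal.Quotient.mk_surjective ((u⁻¹ : (R ⧸ J)ˣ) : R ⧸ J)
  have h1 : Ideal.Quotient.mk J (r * s) = Ideal.Quotient.mk J 1 := by
    rw [map_mul, ← hu, hs, map_one]; exact u.mul_inv
  have h2 : r * s - 1 ∈ J := Ideal.Quotient.eq.mp h1
  exact isUnit_of_mul_isUnit_left
    (Ideal.isUnit_of_sub_one_mem_jacobson_bot _ (hJ h2))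

/-- Stable range one transfers along ring isomorphisms. -/
lemma aux_sr1_transfer {R S : Type*} [CommRing R] [CommRing S] (e : R ≃+* S)
    (hS : ∀ (I : Ideal S) (c c' : S), c * c' - 1 ∈ I → ∃ x ∈ I, IsUnit (c + x))
    (I : Ideal R) (c c' : R) (h : c * c' - 1 ∈ I) : ∃ x ∈ I, IsUnit (c + x) := by
  have hmem : e c * e c' - 1 ∈ I.map (e : R →+* S) := by
    have heq : e c * e c' - 1 = (e : R →+* S) (c * c' - 1) := by simp
    rw [heq]
    exact Ideal.mem_map_of_mem _ h
  obtain ⟨x₁, hx₁, hu₁⟩ := hS _ _ _ hmem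
  obtain ⟨y, hy, rfl⟩ := (Ideal.mem_map_iff_of_surjective _ e.surjective).mp hx₁
  refine ⟨y, hy, ?_⟩
  have h2 := hu₁.map (e.symm : S →+* R)
  simpa using h2

/-- Stable range one descends along quotients by ideals inside the Jacobson radical. -/
lemma aux_sr1_quot {R : Type*} [CommRing R] (J : Ideal R) (hJ : J ≤ Ideal.jacobson ⊥)
    (hS : ∀ (I : Ideal (R ⧸ J)) (c c' : R ⧸ J), c * c' - 1 ∈ I → ∃ x ∈ I, IsUnit (c + x))
    (I : Ideal R) (c c' : R) (h : c * c' - 1 ∈ I) : ∃ x ∈ I, IsUnit (c + x) := by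
  set π : R →+* R ⧸ J := Ideal.Quotient.mk J with hπ
  have hmem : π c * π c' - 1 ∈ I.map π := by
    rw [← map_mul, ← map_one π, ← map_sub]
    exact Ideal.mem_map_of_mem π h
  obtain ⟨x₁, hx₁, hu₁⟩ := hS _ _ _ hmem
  obtain ⟨x, hx, rfl⟩ :=
    (Ideal.mem_map_iff_of_surjective π Ideal.Quotient.mk_surjective).mp hx₁
  refine ⟨x, hx, aux_isUnit_of_quotient hJ ?_⟩
  rw [map_add]
  exact hu₁

/-- Stable range one for commutative algebras that are finite modules over a local ring. -/
lemma aux_comm_lift {Λ R : Type*} [CommRing Λ] [IsLocalRing Λ] [CommRing R] [Algebra Λ R]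
    [Module.Finite Λ R] (I : Ideal R) (c c' : R) (h : c * c' - 1 ∈ I) :
    ∃ x ∈ I, IsUnit (c + x) := by
  classical
  set m := IsLocalRing.maximalIdeal Λ with hm
  set I₀ : Ideal R := Ideal.map (algebraMap Λ R) m with hI₀
  set J : Ideal R := I₀.radical with hJdef
  haveI hint : Algebra.IsIntegral Λ R := Algebra.IsIntegral.of_finite Λ R
  -- J is contained in the Jacobson radical of R
  have hJ : J ≤ Ideal.jacobson (⊥ : Ideal R) := by
    rw [Ideal.jacobson]
    refine le_sInf ?_
    rintro M ⟨-, hM⟩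
    haveI : M.IsMaximal := hM
    have hcm : (M.comap (algebraMap Λ R)).IsMaximal :=
      Ideal.isMaximal_comap_of_isIntegral_of_isMaximal M
    have hI₀M : I₀ ≤ M := Ideal.map_le_iff_le_comap.mpr
      (le_of_eq (IsLocalRing.eq_maximalIdeal hcm).symm)
    exact hM.isPrime.radical_le_iff.mpr hI₀M
  -- R ⧸ J is an artinian reduced commutative ring
  letI : Field (Λ ⧸ m) := Ideal.Quotient.field m
  haveI : Module.Finite Λ (R ⧸ I₀) :=
    Module.Finite.of_surjective (Ideal.Quotient.mkₐ Λ I₀).toLinearMap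
      Ideal.Quotient.mk_surjective
  haveI : Module.Finite (Λ ⧸ m) (R ⧸ I₀) :=
    Module.Finite.of_restrictScalars_finite Λ (Λ ⧸ m) (R ⧸ I₀)
  haveI hart₀ : IsArtinianRing (R ⧸ I₀) := IsArtinianRing.of_finite (Λ ⧸ m) (R ⧸ I₀)
  have hfs : Function.Surjective (Ideal.Quotient.factor (S := I₀) (T := J) Ideal.le_radical) := by
    intro y
    obtain ⟨r, rfl⟩ := Ideal.Quotient.mk_surjective y
    exact ⟨Ideal.Quotient.mk I₀ r, Ideal.Quotient.factor_mk _ _⟩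
  haveI hart : IsArtinianRing (R ⧸ J) := hfs.isArtinianRing
  haveI hred : IsReduced (R ⧸ J) :=
    (Ideal.isRadical_iff_quotient_reduced _).mp (Ideal.radical_isRadical I₀)
  -- transfer stable range one from the product of fields
  letI : ∀ (Iq : MaximalSpectrum (R ⧸ J)), Field ((R ⧸ J) ⧸ Iq.asIdeal) :=
    IsArtinianRing.fieldOfSubtypeIsMaximal _
  exact aux_sr1_quot J hJ
    (aux_sr1_transfer (IsArtinianRing.equivPi (R ⧸ J)).toRingEquiv
      (fun I c c' h => aux_sr1_pi I c c' h)) I c c' h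

/-- Let `Λ` be a noetherian commutative local ring, `A` an associative unital `Λ`-algebra
that is finitely generated as a `Λ`-module, and `ρ : A → B` a surjective homomorphism of
`Λ`-algebras. Then every unit of `B` lifts to a unit of `A`. -/
theorem stmt_0 (Λ : Type*) [CommRing Λ] [IsNoetherianRing Λ] [IsLocalRing Λ]
    (A B : Type*) [Ring A] [Ring B] [Algebra Λ A] [Algebra Λ B]
    [Module.Finite Λ A] (ρ : A →ₐ[Λ] B) (hρ : Function.Surjective ρ) :
    ∀ b : Bˣ, ∃ a : Aˣ, ρ a = (b : B) := by
  intro b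
  obtain ⟨a, ha⟩ := hρ (b : B)
  obtain ⟨a'', ha''⟩ := hρ ((b⁻¹ : Bˣ) : B)
  -- b⁻¹ lies in Λ[b]
  have hbinv : ((b⁻¹ : Bˣ) : B) ∈ Algebra.adjoin Λ {(b : B)} := by
    refine aux_inv_mem_adjoin b ?_
    rw [← ha'']
    exact (IsIntegral.of_finite Λ a'').map ρ
  set C := Algebra.adjoin Λ ({a} : Set A) with hC
  -- C is a finite Λ-module
  haveI : IsNoetherian Λ A := isNoetherian_of_isNoetherianRing_of_finite Λ A
  haveI hCfin : Module.Finite Λ C :=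
    Module.Finite.iff_fg.mpr (IsNoetherian.noetherian (Subalgebra.toSubmodule C))
  -- C is commutative
  letI instC : CommRing C :=
    Algebra.adjoinCommRingOfComm Λ (by
      rintro x hx y hy
      rw [Set.mem_singleton_iff] at hx hy
      subst hx; subst hy; rfl)
  -- ρ maps C onto Λ[b], which contains b⁻¹
  have himg : Subalgebra.map ρ C = Algebra.adjoin Λ {(b : B)} := by
    rw [hC, AlgHom.map_adjoin, Set.image_singleton, ha]
  rw [← himg] at hbinv
  obtain ⟨c'₀, hc'₀C, hc'₀⟩ := Subalgebra.mem_map.mp hbinv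
  set ρ' : C →ₐ[Λ] B := ρ.comp C.val with hρ'
  set I : Ideal C := RingHom.ker ρ'.toRingHom with hI
  set c : C := ⟨a, Algebra.self_mem_adjoin_singleton Λ a⟩ with hc
  set c' : C := ⟨c'₀, hc'₀C⟩ with hc'
  have hρ'c : ρ'.toRingHom c = (b : B) := by
    show ρ (C.val c) = (b : B)
    simpa using ha
  have hρ'c' : ρ'.toRingHom c' = ((b⁻¹ : Bˣ) : B) := by
    show ρ (C.val c') = ((b⁻¹ : Bˣ) : B)
    simpa using hc'₀
  have hcc' : c * c' - 1 ∈ I := by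
    rw [hI, RingHom.mem_ker, map_sub, map_mul, map_one, hρ'c, hρ'c']
    simp
  obtain ⟨x, hxI, hxu⟩ := aux_comm_lift (Λ := Λ) I c c' hcc'
  have hu : IsUnit (((c + x : C) : A)) := hxu.map (C.val : C →+* A)
  refine ⟨hu.unit, ?_⟩
  have hval : (hu.unit : A) = ((c + x : C) : A) := hu.unit_spec
  rw [hval]
  have hrw : ρ (((c + x : C) : A)) = ρ'.toRingHom (c + x) := rfl
  have hx0 : ρ'.toRingHom x = 0 := hxI
  rw [hrw, map_add, hx0, hρ'c, add_zero]
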